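/- A product measure m_p ⊗ μ on Ω × J_β is invariant under the skew product R_β (applying T_β when ω_1 = 1 and L_β when ω_1 = 0, shifting ω) if and only if μ = p·μ∘T_β^{-1} + (1-p)·μ∘L_β^{-1}. -/

import Mathlib

open MeasureTheory Set
open scoped Classical

/-- The interval `J_β = [0, ⌊β⌋/(β-1)]`. -/
noncomputable def Jbeta (β : ℝ) : Set ℝ := Set.Icc 0 ((⌊β⌋ : ℝ) / (β - 1))

/-- The greedy digit of `x` in base `β`: equals `j` iff `x ∈ C(j)`, where
`C(j) = [j/β, (j+1)/β)` for `j < ⌊β⌋` and `C(⌊β⌋) = [⌊β⌋/β, ⌊β⌋/(β-1)]`. -/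
noncomputable def gdigit (β x : ℝ) : ℤ := min ⌊β * x⌋ ⌊β⌋

/-- The greedy map `T_β(x) = βx - d` for `x ∈ C(d)`. -/
noncomputable def gmap (β x : ℝ) : ℝ := β * x - gdigit β x

/-- The reflection `ℓ(x) = ⌊β⌋/(β-1) - x`. -/
noncomputable def lref (β x : ℝ) : ℝ := (⌊β⌋ : ℝ) / (β - 1) - x

/-- The lazy digit: the `d` with `x ∈ Δ(d) = ℓ(C(⌊β⌋ - d))`. -/
noncomputable def ldigit (β x : ℝ) : ℤ := ⌊β⌋ - gdigit β (lref β x)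

/-- The lazy map `L_β(x) = βx - d` for `x ∈ Δ(d)`. -/
noncomputable def lmap (β x : ℝ) : ℝ := β * x - ldigit β x

/-- Membership in the union of the switch regions
`S_k = [k/β, ⌊β⌋/(β(β-1)) + (k-1)/β]`, `k = 1, …, ⌊β⌋`. -/
def inSwitch (β x : ℝ) : Prop :=
  ∃ k : ℤ, 1 ≤ k ∧ k ≤ ⌊β⌋ ∧ (k : ℝ) / β ≤ x ∧
    x ≤ (⌊β⌋ : ℝ) / (β * (β - 1)) + ((k : ℝ) - 1) / β

/-- The digit `d_1(ω,x)` assigned by the random map: the greedy digit, unless `x` is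
in a switch region and the first coin is `0` (tails), in which case the lazy digit. -/
noncomputable def rdigit (β : ℝ) (ω : ℕ → Bool) (x : ℝ) : ℤ :=
  if inSwitch β x ∧ ω 0 = false then ldigit β x else gdigit β x

/-- The random β-expansion map `K_β` on `Ω × J_β`, `Ω = {0,1}^ℕ`: the coin sequence is
shifted exactly when `x` lies in a switch region. -/
noncomputable def kmap (β : ℝ) (p : (ℕ → Bool) × ℝ) : (ℕ → Bool) × ℝ :=
  ((if inSwitch β p.2 then (fun n => p.1 (n + 1)) else p.1),
    β * p.2 - rdigit β p.1 p.2)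

/-- The digit `d_{n+1}(ω,x) = d_1(K_β^n(ω,x))` of the random β-expansion. -/
noncomputable def rdig (β : ℝ) (n : ℕ) (ω : ℕ → Bool) (x : ℝ) : ℤ :=
  rdigit β ((kmap β)^[n] (ω, x)).1 ((kmap β)^[n] (ω, x)).2

/-- The skew product `R_β(ω,x) = (σω, T_β x)` if `ω_1 = 1`, `(σω, L_β x)` if `ω_1 = 0`. -/
noncomputable def rmap (β : ℝ) (p : (ℕ → Bool) × ℝ) : (ℕ → Bool) × ℝ :=
  ((fun n => p.1 (n + 1)), if p.1 0 = true then gmap β p.2 else lmap β p.2)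


namespace PIAux

def cylSet (s : Finset ℕ) (g : ℕ → Bool) : Set (ℕ → Bool) := {ω | ∀ i ∈ s, ω i = g i}

def cyls : Set (Set (ℕ → Bool)) := {S | ∃ s g, S = cylSet s g}

lemma measurableSet_cylSet (s : Finset ℕ) (g : ℕ → Bool) : MeasurableSet (cylSet s g) := by
  have : cylSet s g = ⋂ i ∈ s, {ω : ℕ → Bool | ω i = g i} := by
    ext ω; simp [cylSet]
  rw [this]
  refine MeasurableSet.biInter s.countable_toSet fun i _ => ?_
  have : {ω : ℕ → Bool | ω i = g i} = (fun ω : ℕ → Bool => ω i) ⁻¹' {g i} := by ext; simp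
  rw [this]
  exact (measurable_pi_apply i) (MeasurableSet.singleton (g i))

lemma isPiSystem_cyls : IsPiSystem cyls := by
  rintro _ ⟨s, g, rfl⟩ _ ⟨t, h, rfl⟩ ⟨ω₀, hω₀s, hω₀t⟩
  refine ⟨s ∪ t, fun i => if i ∈ s then g i else h i, ?_⟩
  ext ω
  simp only [cylSet, mem_inter_iff, mem_setOf_eq, Finset.mem_union]
  constructor
  · rintro ⟨h1, h2⟩ i hi
    by_cases his : i ∈ s
    · simp [his, h1 i his]
    · simp [his, h2 i (hi.resolve_left his)]
  · intro h1
    constructor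
    · intro i hi; have := h1 i (Or.inl hi); simpa [hi] using this
    · intro i hi
      have := h1 i (Or.inr hi)
      by_cases his : i ∈ s
      · rw [if_pos his] at this
        rw [this, ← hω₀s i his, hω₀t i hi]
      · rwa [if_neg his] at this

lemma generateFrom_cyls : (MeasurableSpace.pi : MeasurableSpace (ℕ → Bool)) =
    MeasurableSpace.generateFrom cyls := by
  apply le_antisymm
  · apply iSup_le
    intro i
    rw [MeasurableSpace.comap_le_iff_le_map]
    intro S _
    have : (fun ω : ℕ → Bool => ω i) ⁻¹' S = ⋃ b ∈ S, {ω : ℕ → Bool | ω i = b} := by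
      ext ω; simp
    show MeasurableSet[MeasurableSpace.generateFrom cyls] _
    rw [this]
    refine MeasurableSet.biUnion S.to_countable fun b _ => ?_
    refine MeasurableSpace.measurableSet_generateFrom ⟨{i}, fun _ => b, ?_⟩
    ext ω; simp [cylSet]
  · rw [MeasurableSpace.generateFrom_le_iff]
    rintro _ ⟨s, g, rfl⟩
    exact measurableSet_cylSet s g

def shift (ω : ℕ → Bool) (n : ℕ) : Bool := ω (n + 1)

lemma measurable_shift : Measurable shift :=
  measurable_pi_lambda _ fun n => measurable_pi_apply (n + 1)

lemma measurable_gdigit (β : ℝ) : Measurable fun x => ((gdigit β x : ℤ) : ℝ) := by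
  apply measurable_from_top.comp
  exact ((measurable_const.mul measurable_id).floor).min measurable_const

lemma measurable_gmap (β : ℝ) : Measurable (gmap β) :=
  (measurable_const.mul measurable_id).sub (measurable_gdigit β)

lemma measurable_lmap (β : ℝ) : Measurable (lmap β) := by
  unfold lmap ldigit
  apply (measurable_const.mul measurable_id).sub
  have h1 : Measurable (lref β) := measurable_const.sub measurable_id
  have h2 := (measurable_gdigit β).comp h1
  simpa using h2.const_sub (⌊β⌋ : ℝ)

lemma measurable_rmap (β : ℝ) : Measurable (rmap β) := by
  refine Measurable.prod ?_ ?_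
  · exact measurable_shift.comp measurable_fst
  · refine Measurable.ite ?_ ((measurable_gmap β).comp measurable_snd)
      ((measurable_lmap β).comp measurable_snd)
    have : {z : (ℕ → Bool) × ℝ | z.1 0 = true} =
        (fun z : (ℕ → Bool) × ℝ => z.1 0) ⁻¹' {true} := by ext; simp
    rw [this]
    exact ((measurable_pi_apply 0).comp measurable_fst) (MeasurableSet.singleton true)

lemma bern (m : Measure (ℕ → Bool)) [IsProbabilityMeasure m] (p : ℝ)
    (hm : ∀ (s : Finset ℕ) (g : ℕ → Bool),
      m {ω | ∀ i ∈ s, ω i = g i} =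
        ∏ i ∈ s, (if g i = true then ENNReal.ofReal p else ENNReal.ofReal (1 - p)))
    (b : Bool) :
    (m.restrict {ω | ω 0 = b}).map shift =
      (if b = true then ENNReal.ofReal p else ENNReal.ofReal (1 - p)) • m := by
  set q : ENNReal := if b = true then ENNReal.ofReal p else ENNReal.ofReal (1 - p) with hq
  have hb : MeasurableSet {ω : ℕ → Bool | ω 0 = b} := by
    have : {ω : ℕ → Bool | ω 0 = b} = cylSet {0} (fun _ => b) := by
      ext ω; simp [cylSet]
    rw [this]; exact measurableSet_cylSet _ _
  have hmb : m {ω : ℕ → Bool | ω 0 = b} = q := by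
    have : {ω : ℕ → Bool | ω 0 = b} = {ω : ℕ → Bool | ∀ i ∈ ({0} : Finset ℕ), ω i = b} := by
      ext ω; simp
    rw [this, hm ({0} : Finset ℕ) (fun _ => b)]
    simp [hq]
  refine ext_of_generate_finite cyls generateFrom_cyls isPiSystem_cyls ?_ ?_
  · rintro _ ⟨s, g, rfl⟩
    rw [Measure.map_apply measurable_shift (measurableSet_cylSet s g),
      Measure.restrict_apply (measurable_shift (measurableSet_cylSet s g))]
    have hpre : shift ⁻¹' cylSet s g ∩ {ω | ω 0 = b} =
        cylSet (insert 0 (s.image (· + 1))) (fun n => if n = 0 then b else g (n - 1)) := by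
      ext ω
      simp only [cylSet, mem_inter_iff, mem_preimage, mem_setOf_eq, Finset.mem_insert,
        Finset.mem_image, shift]
      constructor
      · rintro ⟨h1, h2⟩ i hi
        rcases hi with rfl | ⟨j, hj, rfl⟩
        · simp [h2]
        · simp [h1 j hj]
      · intro h1
        constructor
        · intro i hi
          have := h1 (i + 1) (Or.inr ⟨i, hi, rfl⟩)
          simpa using this
        · simpa using h1 0 (Or.inl rfl)
    rw [hpre]
    show m _ = (q • m) (cylSet s g)
    rw [Measure.smul_apply, smul_eq_mul]
    unfold cylSet
    rw [hm, hm]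
    have h0 : 0 ∉ s.image (· + 1) := by simp
    rw [Finset.prod_insert h0, Finset.prod_image (by intro a _ c _ h; simp only at h; omega)]
    have e1 : ∀ i ∈ s, (if (if i + 1 = 0 then b else g (i + 1 - 1)) = true
        then ENNReal.ofReal p else ENNReal.ofReal (1 - p)) =
        (if g i = true then ENNReal.ofReal p else ENNReal.ofReal (1 - p)) := by
      intro i _; simp
    rw [Finset.prod_congr rfl e1]
    cases b <;> simp [hq]
  · rw [Measure.map_apply measurable_shift MeasurableSet.univ]
    simp [Measure.restrict_apply MeasurableSet.univ, hmb]

lemma bern_apply (m : Measure (ℕ → Bool)) [IsProbabilityMeasure m] (p : ℝ)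
    (hm : ∀ (s : Finset ℕ) (g : ℕ → Bool),
      m {ω | ∀ i ∈ s, ω i = g i} =
        ∏ i ∈ s, (if g i = true then ENNReal.ofReal p else ENNReal.ofReal (1 - p)))
    (b : Bool) {A : Set (ℕ → Bool)} (hA : MeasurableSet A) :
    m (shift ⁻¹' A ∩ {ω | ω 0 = b}) =
      (if b = true then ENNReal.ofReal p else ENNReal.ofReal (1 - p)) * m A := by
  have := congrArg (fun ν : Measure (ℕ → Bool) => ν A) (bern m p hm b)
  simp only [Measure.smul_apply, smul_eq_mul] at this
  rwa [Measure.map_apply measurable_shift hA,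
    Measure.restrict_apply (measurable_shift hA)] at this

lemma rmap_preimage (β : ℝ) (A : Set (ℕ → Bool)) (B : Set ℝ) :
    rmap β ⁻¹' (A ×ˢ B) =
      ((shift ⁻¹' A ∩ {ω | ω 0 = true}) ×ˢ (gmap β ⁻¹' B)) ∪
      ((shift ⁻¹' A ∩ {ω | ω 0 = false}) ×ˢ (lmap β ⁻¹' B)) := by
  ext z
  constructor
  · intro hz
    have h1 : shift z.1 ∈ A := hz.1
    have h2 : (if z.1 0 = true then gmap β z.2 else lmap β z.2) ∈ B := hz.2
    cases hω : z.1 0 with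
    | true =>
      left
      exact ⟨⟨h1, hω⟩, by rwa [if_pos hω] at h2⟩
    | false =>
      right
      exact ⟨⟨h1, hω⟩, by rwa [if_neg (by simp [hω])] at h2⟩
  · rintro (⟨⟨h1, h3⟩, h2⟩ | ⟨⟨h1, h3⟩, h2⟩)
    · refine ⟨h1, ?_⟩
      show (if z.1 0 = true then gmap β z.2 else lmap β z.2) ∈ B
      rwa [if_pos (show z.1 0 = true from h3)]
    · refine ⟨h1, ?_⟩
      show (if z.1 0 = true then gmap β z.2 else lmap β z.2) ∈ B
      rw [if_neg (by simp [show z.1 0 = false from h3])]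
      exact h2

lemma key (β : ℝ) (p : ℝ) (m : Measure (ℕ → Bool)) [IsProbabilityMeasure m]
    (hm : ∀ (s : Finset ℕ) (g : ℕ → Bool),
      m {ω | ∀ i ∈ s, ω i = g i} =
        ∏ i ∈ s, (if g i = true then ENNReal.ofReal p else ENNReal.ofReal (1 - p)))
    (μ : Measure ℝ) [IsProbabilityMeasure μ]
    {A : Set (ℕ → Bool)} {B : Set ℝ} (hA : MeasurableSet A) (hB : MeasurableSet B) :
    (m.prod μ) (rmap β ⁻¹' (A ×ˢ B)) =
      m A * (ENNReal.ofReal p * μ (gmap β ⁻¹' B) +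
        ENNReal.ofReal (1 - p) * μ (lmap β ⁻¹' B)) := by
  have hbt : MeasurableSet {ω : ℕ → Bool | ω 0 = true} := by
    have : {ω : ℕ → Bool | ω 0 = true} = (fun ω : ℕ → Bool => ω 0) ⁻¹' {true} := by ext; simp
    rw [this]; exact (measurable_pi_apply 0) (MeasurableSet.singleton true)
  have hbf : MeasurableSet {ω : ℕ → Bool | ω 0 = false} := by
    have : {ω : ℕ → Bool | ω 0 = false} = (fun ω : ℕ → Bool => ω 0) ⁻¹' {false} := by ext; simp
    rw [this]; exact (measurable_pi_apply 0) (MeasurableSet.singleton false)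
  rw [rmap_preimage]
  have hdisj : Disjoint
      ((shift ⁻¹' A ∩ {ω | ω 0 = true}) ×ˢ (gmap β ⁻¹' B))
      ((shift ⁻¹' A ∩ {ω | ω 0 = false}) ×ˢ (lmap β ⁻¹' B)) := by
    rw [Set.disjoint_left]
    rintro z ⟨⟨-, h1⟩, -⟩ ⟨⟨-, h2⟩, -⟩
    simp only [mem_setOf_eq] at h1 h2
    rw [h1] at h2; exact Bool.noConfusion h2
  rw [measure_union hdisj
      (((measurable_shift hA).inter hbf).prod (measurable_lmap β hB)),
    Measure.prod_prod, Measure.prod_prod,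
    bern_apply m p hm true hA, bern_apply m p hm false hA]
  norm_num
  ring

end PIAux

/-- a product measure `m_p ⊗ μ` is invariant under the skew product `R_β`
iff `μ = p·μ∘T_β⁻¹ + (1-p)·μ∘L_β⁻¹`. Here `m` is the Bernoulli(p) measure on
`{0,1}^ℕ`, characterized by its values on cylinder sets, and `μ` is a Borel
probability measure on `J_β`. -/
theorem product_invariant_iff (β : ℝ) (hβ : 1 < β) (hni : ¬ ∃ n : ℤ, β = (n : ℝ))
    (p : ℝ) (hp0 : 0 < p) (hp1 : p < 1)
    (m : Measure (ℕ → Bool)) [IsProbabilityMeasure m]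
    (hm : ∀ (s : Finset ℕ) (g : ℕ → Bool),
      m {ω | ∀ i ∈ s, ω i = g i} =
        ∏ i ∈ s, (if g i = true then ENNReal.ofReal p else ENNReal.ofReal (1 - p)))
    (μ : Measure ℝ) [IsProbabilityMeasure μ] (hμ : μ (Jbeta β)ᶜ = 0) :
    (m.prod μ).map (rmap β) = m.prod μ ↔
      μ = ENNReal.ofReal p • μ.map (gmap β) +
        ENNReal.ofReal (1 - p) • μ.map (lmap β) := by
  constructor
  · intro h
    ext B hB
    have h1 : ((m.prod μ).map (rmap β)) (Set.univ ×ˢ B) = (m.prod μ) (Set.univ ×ˢ B) := by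
      rw [h]
    rw [Measure.map_apply (PIAux.measurable_rmap β) (MeasurableSet.univ.prod hB),
      PIAux.key β p m hm μ MeasurableSet.univ hB, Measure.prod_prod] at h1
    simp only [measure_univ, one_mul] at h1
    rw [← h1]
    simp [Measure.add_apply, Measure.smul_apply, smul_eq_mul,
      Measure.map_apply (PIAux.measurable_gmap β) hB,
      Measure.map_apply (PIAux.measurable_lmap β) hB]
  · intro h
    refine (Measure.prod_eq fun A B hA hB => ?_).symm
    rw [Measure.map_apply (PIAux.measurable_rmap β) (hA.prod hB),
      PIAux.key β p m hm μ hA hB]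
    congr 1
    have hB' : μ B = ENNReal.ofReal p * μ (gmap β ⁻¹' B) +
        ENNReal.ofReal (1 - p) * μ (lmap β ⁻¹' B) := by
      conv_lhs => rw [h]
      simp [Measure.add_apply, Measure.smul_apply, smul_eq_mul,
        Measure.map_apply (PIAux.measurable_gmap β) hB,
        Measure.map_apply (PIAux.measurable_lmap β) hB]
    exact hB'.symm
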